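/- arXiv:1202.3800 — 3 statements merged into one kernel-verified Lean document; each statement's English description precedes it below -/
import Mathlib

section
/- Let K : [0,1] × [0,1] → ℝ be a continuous nonnegative kernel such that there exists a constant C with ∫₀¹ K(s,r) ds = C for all r ∈ [0,1]. Let L be the integral operator on L¹(0,1) with kernel K. Then the spectral radius of L equals C, which equals the double integral ∫₀¹ ∫₀¹ K(s,r) dr ds. -/
open MeasureTheory Set

theorem stmt_2_aux (μ : Measure ℝ) (hμdef : μ = volume.restrict (Icc (0:ℝ) 1))
    (K : ℝ → ℝ → ℝ) (C : ℝ)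
    (hKc : ContinuousOn (fun p : ℝ × ℝ => K p.1 p.2) (Icc 0 1 ×ˢ Icc 0 1))
    (hK0 : ∀ s ∈ Icc (0:ℝ) 1, ∀ r ∈ Icc (0:ℝ) 1, 0 ≤ K s r)
    (hC : ∀ r ∈ Icc (0:ℝ) 1, ∫ s, K s r ∂μ = C)
    (L : Lp ℝ 1 μ →L[ℝ] Lp ℝ 1 μ)
    (hL : ∀ x : Lp ℝ 1 μ, ∀ᵐ s ∂μ, (L x : ℝ → ℝ) s = ∫ r, K s r * x r ∂μ) :
    spectralRadius ℝ L = ENNReal.ofReal C ∧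
      C = ∫ s, ∫ r, K s r ∂μ ∂μ := by
  have hμIcc : μ (Icc (0:ℝ) 1) = 1 := by
    simp [hμdef, Measure.restrict_apply, Real.volume_Icc]
  haveI : IsFiniteMeasure μ := by
    constructor
    simp [hμdef, Real.volume_Icc]
  have hμuniv : (μ univ).toReal = 1 := by
    simp [hμdef, Real.volume_Icc]
  have haeIcc : ∀ᵐ s ∂μ, s ∈ Icc (0:ℝ) 1 := by
    rw [hμdef]; exact ae_restrict_mem measurableSet_Icc
  -- measurability of the kernel on the product
  have hprod : μ.prod μ = (volume.prod volume).restrict (Icc (0:ℝ) 1 ×ˢ Icc (0:ℝ) 1) := by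
    rw [hμdef, Measure.prod_restrict]
  have hKm : AEStronglyMeasurable (fun p : ℝ × ℝ => K p.1 p.2) (μ.prod μ) := by
    rw [hprod]
    exact (hKc.aemeasurable (measurableSet_Icc.prod measurableSet_Icc)).aestronglyMeasurable
  have hsq : ∀ᵐ p ∂(μ.prod μ), p ∈ Icc (0:ℝ) 1 ×ˢ Icc (0:ℝ) 1 := by
    rw [hprod]
    exact ae_restrict_mem (measurableSet_Icc.prod measurableSet_Icc)
  obtain ⟨M, hM⟩ := (isCompact_Icc.prod isCompact_Icc).exists_bound_of_continuousOn hKc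
  -- integrability on the product
  have keyB : ∀ g : ℝ → ℝ, Integrable g μ →
      Integrable (fun p : ℝ × ℝ => K p.1 p.2 * g p.2) (μ.prod μ) := by
    intro g hg
    have hdom : Integrable (fun p : ℝ × ℝ => M * g p.2) (μ.prod μ) :=
      (integrable_const M).mul_prod hg
    refine hdom.norm.mono' (hKm.mul hg.aestronglyMeasurable.comp_snd) ?_
    filter_upwards [hsq] with p hp
    rw [norm_mul, norm_mul]
    exact mul_le_mul_of_nonneg_right ((hM p hp).trans (Real.le_norm_self M)) (norm_nonneg _)
  -- Fubini identity
  have keyA : ∀ g : ℝ → ℝ, Integrable g μ →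
      (∫ s, ∫ r, K s r * g r ∂μ ∂μ) = C * ∫ r, g r ∂μ := by
    intro g hg
    rw [integral_integral_swap (keyB g hg), ← integral_const_mul]
    refine integral_congr_ae ?_
    filter_upwards [haeIcc] with r hr
    rw [integral_mul_const, hC r hr]
  -- second claim
  have h2 : C = ∫ s, ∫ r, K s r ∂μ ∂μ := by
    have h := keyA (fun _ => 1) (integrable_const 1)
    simp only [mul_one, integral_const, measureReal_def, hμuniv, smul_eq_mul] at h
    rw [← h]
  -- nonnegativity of C
  have hCnn : 0 ≤ C := by
    rw [← hC 0 (left_mem_Icc.mpr zero_le_one)]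
    rw [hμdef]
    exact setIntegral_nonneg measurableSet_Icc fun s hs => hK0 s hs 0 (left_mem_Icc.mpr zero_le_one)
  -- operator norm bound
  have hnorm : ∀ x : Lp ℝ 1 μ, ‖L x‖ ≤ C * ‖x‖ := by
    intro x
    have hxi : Integrable (x : ℝ → ℝ) μ := L1.integrable_coeFn x
    have hBn := keyB (fun r => ‖x r‖) hxi.norm
    have hA := keyA (fun r => ‖x r‖) hxi.norm
    rw [L1.norm_eq_integral_norm, L1.norm_eq_integral_norm, ← hA]
    refine integral_mono_ae (L1.integrable_coeFn (L x)).norm hBn.integral_prod_left ?_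
    filter_upwards [hL x, haeIcc] with s hs hsmem
    rw [hs]
    calc ‖∫ r, K s r * x r ∂μ‖ ≤ ∫ r, ‖K s r * x r‖ ∂μ := norm_integral_le_integral_norm _
      _ = ∫ r, K s r * ‖x r‖ ∂μ := by
          refine integral_congr_ae ?_
          filter_upwards [haeIcc] with r hr
          rw [norm_mul, Real.norm_of_nonneg (hK0 s hsmem r hr)]
  have hLnorm : ‖L‖ ≤ C := L.opNorm_le_bound hCnn hnorm
  -- the integral functional
  have hφ : ∀ y : Lp ℝ 1 μ, L1.integralCLM y = ∫ a, y a ∂μ := fun y => by rw [← L1.integral_eq (E := ℝ) y]; exact L1.integral_eq_integral y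
  have hcomm : ∀ x : Lp ℝ 1 μ, L1.integralCLM (L x) = C * L1.integralCLM x := by
    intro x
    rw [hφ, hφ, integral_congr_ae (hL x)]
    exact keyA x (L1.integrable_coeFn x)
  -- test element
  set x₀ : Lp ℝ 1 μ :=
    indicatorConstLp 1 measurableSet_Icc (by rw [hμIcc]; exact ENNReal.one_ne_top) (1:ℝ)
    with hx₀def
  have hx₀ : L1.integralCLM x₀ = 1 := by
    rw [hφ, hx₀def, integral_indicatorConstLp measurableSet_Icc _ _, measureReal_def, hμIcc]
    simp
  -- C is in the spectrum
  have hmem : C ∈ spectrum ℝ L := by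
    rw [spectrum.mem_iff]
    intro hunit
    set T : Lp ℝ 1 μ →L[ℝ] Lp ℝ 1 μ := algebraMap ℝ _ C - L with hT
    have h0 : ∀ y : Lp ℝ 1 μ, L1.integralCLM (T y) = 0 := by
      intro y
      have hTy : T y = C • y - L y := by
        simp [hT, Algebra.algebraMap_eq_smul_one]
      rw [hTy, map_sub, hcomm, _root_.map_smul, smul_eq_mul, sub_self]
    obtain ⟨u, hu⟩ := hunit
    have h1 : ((u : Lp ℝ 1 μ →L[ℝ] Lp ℝ 1 μ) * ↑u⁻¹) = 1 := u.mul_inv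
    have hz : L1.integralCLM x₀ = 0 := by
      calc L1.integralCLM x₀
          = L1.integralCLM (((u : Lp ℝ 1 μ →L[ℝ] Lp ℝ 1 μ) * ↑u⁻¹) x₀) := by
            rw [h1]; rfl
        _ = L1.integralCLM (T ((↑u⁻¹ : Lp ℝ 1 μ →L[ℝ] Lp ℝ 1 μ) x₀)) := by rw [← hu]; rfl
        _ = 0 := h0 _
    rw [hx₀] at hz
    exact one_ne_zero hz
  -- conclude
  haveI : Nontrivial (Lp ℝ 1 μ) := by
    refine ⟨⟨x₀, 0, fun h => ?_⟩⟩
    rw [h, map_zero] at hx₀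
    exact one_ne_zero hx₀.symm
  have hup : spectralRadius ℝ L ≤ ENNReal.ofReal C := by
    refine (spectrum.spectralRadius_le_nnnorm (𝕜 := ℝ) L).trans ?_
    rw [← ENNReal.ofReal_coe_nnreal, coe_nnnorm]
    exact ENNReal.ofReal_le_ofReal hLnorm
  have hlow : ENNReal.ofReal C ≤ spectralRadius ℝ L := by
    rw [← Real.enorm_eq_ofReal hCnn]
    exact le_iSup₂ (f := fun (k : ℝ) (_ : k ∈ spectrum ℝ L) => (‖k‖₊ : ENNReal)) C hmem
  exact ⟨le_antisymm hup hlow, h2⟩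

theorem stmt_2 (K : ℝ → ℝ → ℝ) (C : ℝ)
    (hKc : ContinuousOn (fun p : ℝ × ℝ => K p.1 p.2) (Icc 0 1 ×ˢ Icc 0 1))
    (hK0 : ∀ s ∈ Icc (0:ℝ) 1, ∀ r ∈ Icc (0:ℝ) 1, 0 ≤ K s r)
    (hC : ∀ r ∈ Icc (0:ℝ) 1, ∫ s in Icc (0:ℝ) 1, K s r = C)
    (L : Lp ℝ 1 (volume.restrict (Icc (0:ℝ) 1)) →L[ℝ]
         Lp ℝ 1 (volume.restrict (Icc (0:ℝ) 1)))
    (hL : ∀ x : Lp ℝ 1 (volume.restrict (Icc (0:ℝ) 1)),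
        ∀ᵐ s ∂(volume.restrict (Icc (0:ℝ) 1)),
          (L x : ℝ → ℝ) s = ∫ r in Icc (0:ℝ) 1, K s r * x r) :
    spectralRadius ℝ L = ENNReal.ofReal C ∧
      C = ∫ s in Icc (0:ℝ) 1, ∫ r in Icc (0:ℝ) 1, K s r := by
  exact stmt_2_aux _ rfl K C hKc hK0 hC L hL
end

section
/- Let K : [0,1] × [0,1] → ℝ be a continuous nonnegative kernel such that there exists a constant C* with ∫₀¹ K(s,r) dr = C* for all s ∈ [0,1]. Let L be the integral operator on L¹(0,1) with kernel K. Then the spectral radius of L equals C*, which equals ∫₀¹ ∫₀¹ K(s,r) dr ds. -/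
open MeasureTheory Set
open scoped ENNReal NNReal

/-- If `x ^ (n+1) ≤ B * C ^ n` for all `n`, with `0 ≤ x` and `0 ≤ C`, then `x ≤ C`. -/
lemma aux_le_of_pow_le {x B C : ℝ} (_hx : 0 ≤ x) (hC : 0 ≤ C)
    (h : ∀ n : ℕ, x ^ (n + 1) ≤ B * C ^ n) : x ≤ C := by
  by_contra hlt
  push_neg at hlt
  have hx0 : 0 < x := lt_of_le_of_lt hC hlt
  have hratio : C / x < 1 := (div_lt_one hx0).2 hlt
  have hr0 : 0 ≤ C / x := div_nonneg hC hx0.le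
  have htend : Filter.Tendsto (fun n : ℕ => B * (C / x) ^ n) Filter.atTop (nhds 0) := by
    simpa using (tendsto_pow_atTop_nhds_zero_of_lt_one hr0 hratio).const_mul B
  obtain ⟨n, hn⟩ := (htend.eventually (gt_mem_nhds hx0)).exists
  have key : B * C ^ n = B * (C / x) ^ n * x ^ n := by
    rw [div_pow, mul_assoc, div_mul_cancel₀ _ (pow_ne_zero n hx0.ne')]
  have hcontra : x ^ (n + 1) < x ^ (n + 1) := by
    calc x ^ (n + 1) ≤ B * C ^ n := h n
      _ = B * (C / x) ^ n * x ^ n := key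
      _ < x * x ^ n := mul_lt_mul_of_pos_right hn (pow_pos hx0 n)
      _ = x ^ (n + 1) := (pow_succ' x n).symm
  exact lt_irrefl _ hcontra

local notation "μ01" => MeasureTheory.Measure.restrict MeasureTheory.volume (Set.Icc (0:ℝ) 1)

theorem stmt_3 (K : ℝ → ℝ → ℝ) (Cstar : ℝ)
    (hKc : ContinuousOn (fun p : ℝ × ℝ => K p.1 p.2) (Icc 0 1 ×ˢ Icc 0 1))
    (hK0 : ∀ s ∈ Icc (0:ℝ) 1, ∀ r ∈ Icc (0:ℝ) 1, 0 ≤ K s r)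
    (hC : ∀ s ∈ Icc (0:ℝ) 1, ∫ r in Icc (0:ℝ) 1, K s r = Cstar)
    (L : Lp ℝ 1 (volume.restrict (Icc (0:ℝ) 1)) →L[ℝ]
         Lp ℝ 1 (volume.restrict (Icc (0:ℝ) 1)))
    (hL : ∀ x : Lp ℝ 1 (volume.restrict (Icc (0:ℝ) 1)),
        ∀ᵐ s ∂(volume.restrict (Icc (0:ℝ) 1)),
          (L x : ℝ → ℝ) s = ∫ r in Icc (0:ℝ) 1, K s r * x r) :
    spectralRadius ℝ L = ENNReal.ofReal Cstar ∧
      Cstar = ∫ s in Icc (0:ℝ) 1, ∫ r in Icc (0:ℝ) 1, K s r := by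
  -- basic measure facts
  have hμ1 : measureUnivNNReal μ01 = 1 := by
    simp [measureUnivNNReal, Real.volume_Icc]
  have hμuniv : μ01 Set.univ = 1 := by
    simp [Real.volume_Icc]
  -- Cstar is nonnegative
  have hC0 : 0 ≤ Cstar := by
    rw [← hC 0 (by norm_num)]
    exact setIntegral_nonneg measurableSet_Icc (fun r hr => hK0 0 (by norm_num) r hr)
  -- the bound on K
  obtain ⟨B0, hB0⟩ := (isCompact_Icc.prod isCompact_Icc).exists_bound_of_continuousOn hKc
  set B := max B0 0 with hBdef
  have hBnn : 0 ≤ B := le_max_right _ _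
  have hB : ∀ s ∈ Icc (0:ℝ) 1, ∀ r ∈ Icc (0:ℝ) 1, ‖K s r‖ ≤ B :=
    fun s hs r hr => le_trans (hB0 (s, r) ⟨hs, hr⟩) (le_max_left _ _)
  -- integrability of sections of K
  have hKs : ∀ s ∈ Icc (0:ℝ) 1, IntegrableOn (fun r => K s r) (Icc (0:ℝ) 1) volume := by
    intro s hs
    apply ContinuousOn.integrableOn_compact isCompact_Icc
    exact hKc.comp ((continuous_const.prodMk continuous_id).continuousOn)
      (fun r hr => Set.mk_mem_prod hs hr)
  -- second conjunct
  have h2 : Cstar = ∫ s in Icc (0:ℝ) 1, ∫ r in Icc (0:ℝ) 1, K s r := by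
    rw [setIntegral_congr_fun measurableSet_Icc (fun s hs => hC s hs)]
    simp [Real.volume_Icc]
  -- the key pointwise bound on iterates
  have key : ∀ n : ℕ, ∀ x : Lp ℝ 1 μ01,
      ∀ᵐ s ∂μ01, ‖((L ^ (n + 1)) x : ℝ → ℝ) s‖ ≤ B * Cstar ^ n * ‖x‖ := by
    intro n
    induction n with
    | zero =>
      intro x
      have hint : Integrable (fun r => B * ‖(x : ℝ → ℝ) r‖) μ01 :=
        ((L1.integrable_coeFn x).norm.const_mul B)
      filter_upwards [hL x, ae_restrict_mem measurableSet_Icc] with s hs hsI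
      simp only [zero_add, pow_one, pow_zero, mul_one]
      rw [hs]
      calc ‖∫ r in Icc (0:ℝ) 1, K s r * (x : ℝ → ℝ) r‖
          ≤ ∫ r in Icc (0:ℝ) 1, ‖K s r * (x : ℝ → ℝ) r‖ := norm_integral_le_integral_norm _
        _ ≤ ∫ r in Icc (0:ℝ) 1, B * ‖(x : ℝ → ℝ) r‖ := by
            refine integral_mono_of_nonneg (Filter.Eventually.of_forall fun r => norm_nonneg _)
              hint ?_
            filter_upwards [ae_restrict_mem measurableSet_Icc] with r hrI
            rw [norm_mul]
            exact mul_le_mul_of_nonneg_right (hB s hsI r hrI) (norm_nonneg _)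
        _ = B * ‖x‖ := by rw [integral_const_mul, ← L1.norm_eq_integral_norm]
    | succ n ih =>
      intro x
      set y : Lp ℝ 1 μ01 := (L ^ (n + 1)) x with hydef
      have hy := ih x
      set M := B * Cstar ^ n * ‖x‖ with hMdef
      have hM : 0 ≤ M := by positivity
      have hpow : (L ^ (n + 1 + 1)) x = L y := by
        rw [pow_succ', ContinuousLinearMap.mul_apply]
      filter_upwards [hL y, ae_restrict_mem measurableSet_Icc] with s hs hsI
      rw [hpow, hs]
      have hle : ∀ᵐ r ∂μ01, ‖K s r * (y : ℝ → ℝ) r‖ ≤ K s r * M := by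
        filter_upwards [hy, ae_restrict_mem measurableSet_Icc] with r hr hrI
        rw [norm_mul, Real.norm_of_nonneg (hK0 s hsI r hrI)]
        exact mul_le_mul_of_nonneg_left hr (hK0 s hsI r hrI)
      calc ‖∫ r in Icc (0:ℝ) 1, K s r * (y : ℝ → ℝ) r‖
          ≤ ∫ r in Icc (0:ℝ) 1, ‖K s r * (y : ℝ → ℝ) r‖ := norm_integral_le_integral_norm _
        _ ≤ ∫ r in Icc (0:ℝ) 1, K s r * M := by
            refine integral_mono_of_nonneg (Filter.Eventually.of_forall fun r => norm_nonneg _)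
              ((hKs s hsI).mul_const M) hle
        _ = Cstar * M := by rw [integral_mul_const, hC s hsI]
        _ = B * Cstar ^ (n + 1) * ‖x‖ := by rw [hMdef]; ring
  -- operator norm bound on iterates
  have hnorm : ∀ n : ℕ, ‖L ^ (n + 1)‖ ≤ B * Cstar ^ n := by
    intro n
    refine ContinuousLinearMap.opNorm_le_bound _ (by positivity) (fun x => ?_)
    have hb := Lp.norm_le_of_ae_bound (μ := μ01) (f := (L ^ (n + 1)) x)
      (C := B * Cstar ^ n * ‖x‖) (by positivity) (key n x)
    simpa [hμ1, mul_assoc] using hb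
  -- upper bound for the spectral radius
  have hupper : spectralRadius ℝ L ≤ ENNReal.ofReal Cstar := by
    rw [spectralRadius]
    refine iSup₂_le fun k hk => ?_
    have hk' : ‖k‖ ≤ Cstar := by
      refine aux_le_of_pow_le (B := B) (norm_nonneg k) hC0 (fun n => ?_)
      have pow_mem : k ^ (n + 1) ∈ spectrum ℝ (L ^ (n + 1)) := by
        simpa only [one_mul, Algebra.algebraMap_eq_smul_one, one_smul,
          Polynomial.aeval_monomial, Polynomial.eval_monomial] using
          spectrum.subset_polynomial_aeval L (Polynomial.monomial (n + 1) (1 : ℝ)) ⟨k, hk, rfl⟩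
      have h1 : ‖k ^ (n + 1)‖ ≤ ‖L ^ (n + 1)‖ * ‖(1 : Lp ℝ 1 μ01 →L[ℝ] Lp ℝ 1 μ01)‖ :=
        spectrum.norm_le_norm_mul_of_mem pow_mem
      have h2' : ‖(1 : Lp ℝ 1 μ01 →L[ℝ] Lp ℝ 1 μ01)‖ ≤ 1 := ContinuousLinearMap.norm_id_le
      calc ‖k‖ ^ (n + 1) = ‖k ^ (n + 1)‖ := (norm_pow k (n + 1)).symm
        _ ≤ ‖L ^ (n + 1)‖ * ‖(1 : Lp ℝ 1 μ01 →L[ℝ] Lp ℝ 1 μ01)‖ := h1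
        _ ≤ (B * Cstar ^ n) * 1 :=
            mul_le_mul (hnorm n) h2' (norm_nonneg _) (by positivity)
        _ = B * Cstar ^ n := mul_one _
    have hkn : ‖k‖ ≤ ‖Cstar‖ := by rwa [Real.norm_of_nonneg hC0]
    calc ((‖k‖₊ : ℝ≥0∞)) ≤ (‖Cstar‖₊ : ℝ≥0∞) := by exact_mod_cast hkn
      _ = ENNReal.ofReal Cstar := Real.enorm_eq_ofReal hC0
  -- the constant function 1 as an element of L¹
  have hu : MemLp (fun _ : ℝ => (1 : ℝ)) 1 μ01 := memLp_const 1
  set u : Lp ℝ 1 μ01 := hu.toLp _ with hudef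
  have hucoe : (u : ℝ → ℝ) =ᵐ[μ01] fun _ => (1 : ℝ) := hu.coeFn_toLp
  have hune : u ≠ 0 := by
    intro h
    have h0 : (fun _ : ℝ => (1 : ℝ)) =ᵐ[μ01] (fun _ => (0 : ℝ)) := by
      refine Filter.EventuallyEq.trans hucoe.symm ?_
      rw [h]
      exact Lp.coeFn_zero _ _ _
    have : ∀ᵐ _x ∂μ01, (1 : ℝ) = 0 := h0
    rw [ae_iff] at this
    simp only [one_ne_zero, not_false_iff, Set.setOf_true] at this
    rw [hμuniv] at this
    exact one_ne_zero this
  -- u is an eigenvector with eigenvalue Cstar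
  have heig : L u = Cstar • u := by
    apply Lp.ext (p := 1) (μ := μ01)
    filter_upwards [hL u, ae_restrict_mem measurableSet_Icc, Lp.coeFn_smul Cstar u, hucoe]
      with s h1 h2 h3 h4
    rw [h1, h3]
    have hint : ∫ r in Icc (0:ℝ) 1, K s r * (u : ℝ → ℝ) r = ∫ r in Icc (0:ℝ) 1, K s r := by
      refine integral_congr_ae ?_
      filter_upwards [hucoe] with r hr
      rw [hr, mul_one]
    rw [hint, hC s h2, Pi.smul_apply, h4, smul_eq_mul, mul_one]
  -- Cstar is in the spectrum
  have hmem : Cstar ∈ spectrum ℝ L := by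
    rw [spectrum.mem_iff]
    intro hunit
    have h0 : (algebraMap ℝ (Lp ℝ 1 μ01 →L[ℝ] Lp ℝ 1 μ01) Cstar - L) u = 0 := by
      rw [ContinuousLinearMap.sub_apply, Algebra.algebraMap_eq_smul_one,
        ContinuousLinearMap.smul_apply, ContinuousLinearMap.one_apply, heig, sub_self]
    obtain ⟨v, hv⟩ := hunit
    have h1 := congrArg (fun f : Lp ℝ 1 μ01 →L[ℝ] Lp ℝ 1 μ01 => f u) v.inv_mul
    simp only [ContinuousLinearMap.mul_apply, ContinuousLinearMap.one_apply, hv, h0,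
      map_zero] at h1
    exact hune h1.symm
  -- lower bound for the spectral radius
  have hlower : ENNReal.ofReal Cstar ≤ spectralRadius ℝ L := by
    have : (‖Cstar‖₊ : ℝ≥0∞) ≤ spectralRadius ℝ L := by
      rw [spectralRadius]
      exact le_iSup₂ (f := fun k (_ : k ∈ spectrum ℝ L) => (‖k‖₊ : ℝ≥0∞)) Cstar hmem
    rwa [← Real.enorm_eq_ofReal hC0]
  exact ⟨le_antisymm hupper hlower, h2⟩
end

section
/- Let A be an n × n matrix with strictly positive real entries and spectral radius ρ(A) = 1. Then 1 is an eigenvalue of A and there exists a vector v ∈ ℝⁿ with all entries strictly positive such that A v = v. -/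
open Matrix Finset

/-- The spectral radius of a real square matrix: the supremum of the moduli of
its complex eigenvalues. -/
noncomputable def specRad {n : ℕ} (M : Matrix (Fin n) (Fin n) ℝ) : ℝ :=
  sSup ((fun z : ℂ => ‖z‖) '' spectrum ℂ (M.map (fun x => (x : ℂ))))

section helpers

lemma pf_mulVec_nonneg {n : ℕ} (A : Matrix (Fin n) (Fin n) ℝ) (hpos : ∀ i j, 0 < A i j)
    {w : Fin n → ℝ} (hw : ∀ i, 0 ≤ w i) (i : Fin n) : 0 ≤ A.mulVec w i := by
  simp only [Matrix.mulVec, dotProduct]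
  exact Finset.sum_nonneg fun j _ => mul_nonneg (hpos i j).le (hw j)

lemma pf_mulVec_pos {n : ℕ} (A : Matrix (Fin n) (Fin n) ℝ) (hpos : ∀ i j, 0 < A i j)
    {w : Fin n → ℝ} (hw : ∀ i, 0 ≤ w i) (hne : ∃ j, 0 < w j) (i : Fin n) :
    0 < A.mulVec w i := by
  obtain ⟨j, hj⟩ := hne
  have h1 : 0 < A i j * w j := mul_pos (hpos i j) hj
  have h2 : A i j * w j ≤ ∑ k, A i k * w k :=
    Finset.single_le_sum (fun k _ => mul_nonneg (hpos i k).le (hw k)) (mem_univ j)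
  simpa only [Matrix.mulVec, dotProduct] using h1.trans_le h2

lemma pf_mem_spectrum_of_eig {K : Type*} [Field K] {m : ℕ} (M : Matrix (Fin m) (Fin m) K)
    (μ : K) (z : Fin m → K) (hz : z ≠ 0) (h : M.mulVec z = μ • z) : μ ∈ spectrum K M := by
  rw [spectrum.mem_iff]
  rw [Matrix.isUnit_iff_isUnit_det, isUnit_iff_ne_zero, not_not]
  rw [← Matrix.exists_mulVec_eq_zero_iff]
  refine ⟨z, hz, ?_⟩
  rw [Matrix.sub_mulVec, h]
  have : (algebraMap K (Matrix (Fin m) (Fin m) K) μ) = μ • (1 : Matrix (Fin m) (Fin m) K) := by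
    simp [Algebra.algebraMap_eq_smul_one]
  rw [this, Matrix.smul_mulVec, Matrix.one_mulVec, sub_self]

lemma pf_eig_of_mem_spectrum {K : Type*} [Field K] {m : ℕ} (M : Matrix (Fin m) (Fin m) K)
    (μ : K) (h : μ ∈ spectrum K M) : ∃ z : Fin m → K, z ≠ 0 ∧ M.mulVec z = μ • z := by
  rw [spectrum.mem_iff, Matrix.isUnit_iff_isUnit_det, isUnit_iff_ne_zero, not_not,
    ← Matrix.exists_mulVec_eq_zero_iff] at h
  obtain ⟨z, hz, hz2⟩ := h
  refine ⟨z, hz, ?_⟩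
  rw [Matrix.sub_mulVec] at hz2
  have : (algebraMap K (Matrix (Fin m) (Fin m) K) μ) = μ • (1 : Matrix (Fin m) (Fin m) K) := by
    simp [Algebra.algebraMap_eq_smul_one]
  rw [this, Matrix.smul_mulVec, Matrix.one_mulVec] at hz2
  exact (sub_eq_zero.mp hz2).symm
end helpers

theorem stmt_11 (n : ℕ) (A : Matrix (Fin n) (Fin n) ℝ)
    (hpos : ∀ i j, 0 < A i j) (hρ : specRad A = 1) :
    (1 : ℝ) ∈ spectrum ℝ A ∧
      ∃ v : Fin n → ℝ, (∀ i, 0 < v i) ∧ A.mulVec v = v := by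
  rcases Nat.eq_zero_or_pos n with hn | hn
  · exfalso
    subst hn
    have h1 : spectrum ℂ (A.map (fun x => (x : ℂ))) = ∅ := by
      ext z
      simp [spectrum.mem_iff, isUnit_of_subsingleton]
    rw [specRad, h1, Set.image_empty, Real.sSup_empty] at hρ
    norm_num at hρ
  haveI : NeZero n := ⟨hn.ne'⟩
  -- the Collatz–Wielandt optimization set
  set B : ℝ := ∑ i, ∑ j, A i j with hB
  set C : Set (ℝ × (Fin n → ℝ)) :=
    {p | p.1 ∈ Set.Icc (0:ℝ) (B+1) ∧ p.2 ∈ stdSimplex ℝ (Fin n) ∧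
      ∀ i, p.1 * p.2 i ≤ A.mulVec p.2 i} with hCdef
  have hCeq : C = (Set.Icc (0:ℝ) (B+1) ×ˢ stdSimplex ℝ (Fin n)) ∩
      ⋂ i, {p : ℝ × (Fin n → ℝ) | p.1 * p.2 i ≤ A.mulVec p.2 i} := by
    ext p
    simp only [hCdef, Set.mem_setOf_eq, Set.mem_inter_iff, Set.mem_prod, Set.mem_iInter]
    tauto
  have hCcompact : IsCompact C := by
    rw [hCeq]
    refine ((isCompact_Icc).prod (isCompact_stdSimplex ℝ (Fin n))).inter_right ?_
    refine isClosed_iInter fun i => isClosed_le ?_ ?_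
    · exact continuous_fst.mul ((continuous_apply i).comp continuous_snd)
    · simp only [Matrix.mulVec, dotProduct]
      exact continuous_finset_sum _ fun j _ =>
        continuous_const.mul ((continuous_apply j).comp continuous_snd)
  -- the uniform vector
  have hu : (fun _ : Fin n => (n : ℝ)⁻¹) ∈ stdSimplex ℝ (Fin n) := by
    constructor
    · intro i; positivity
    · rw [Finset.sum_const, Finset.card_univ, Fintype.card_fin, nsmul_eq_mul,
        mul_inv_cancel₀ (Nat.cast_ne_zero.mpr (NeZero.ne n))]
  have hCne : C.Nonempty := by
    refine ⟨(0, fun _ => (n:ℝ)⁻¹), ?_, hu, fun i => ?_⟩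
    · constructor
      · exact le_refl 0
      · have : (0:ℝ) ≤ B := Finset.sum_nonneg fun i _ =>
          Finset.sum_nonneg fun j _ => (hpos i j).le
        linarith
    · rw [zero_mul]
      exact pf_mulVec_nonneg A hpos (fun i => by positivity) i
  obtain ⟨⟨r, v⟩, hmem, hmax⟩ := hCcompact.exists_isMaxOn hCne continuous_fst.continuousOn
  have hmax' : ∀ p ∈ C, p.1 ≤ r := fun p hp => hmax hp
  have hr0 : 0 ≤ r := hmem.1.1
  have hv : v ∈ stdSimplex ℝ (Fin n) := hmem.2.1
  have hvnn : ∀ i, 0 ≤ v i := hv.1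
  have hAv : ∀ i, r * v i ≤ A.mulVec v i := hmem.2.2
  -- Collatz–Wielandt upper bound
  have cw_upper : ∀ (t : ℝ) (x : Fin n → ℝ), (∀ i, 0 ≤ x i) → (∃ j, 0 < x j) →
      (∀ i, t * x i ≤ A.mulVec x i) → t ≤ r := by
    intro t x hxnn hxpos hineq
    rcases le_or_gt t 0 with ht | ht
    · exact ht.trans hr0
    have hs : 0 < ∑ j, x j := Finset.sum_pos' (fun j _ => hxnn j)
      ⟨hxpos.choose, Finset.mem_univ _, hxpos.choose_spec⟩
    set s : ℝ := ∑ j, x j with hsdef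
    set x' : Fin n → ℝ := s⁻¹ • x with hx'def
    have hx'nn : ∀ i, 0 ≤ x' i := fun i =>
      mul_nonneg (inv_nonneg.mpr hs.le) (hxnn i)
    have hx'sum : ∑ j, x' j = 1 := by
      simp only [hx'def, Pi.smul_apply, smul_eq_mul, ← Finset.mul_sum]
      rw [← hsdef, inv_mul_cancel₀ hs.ne']
    have hx'simplex : x' ∈ stdSimplex ℝ (Fin n) := ⟨hx'nn, hx'sum⟩
    have hineq' : ∀ i, t * x' i ≤ A.mulVec x' i := by
      intro i
      have h2 : A.mulVec x' i = s⁻¹ * A.mulVec x i := by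
        rw [hx'def, Matrix.mulVec_smul]
        simp
      have h3 : t * x' i = s⁻¹ * (t * x i) := by
        simp only [hx'def, Pi.smul_apply, smul_eq_mul]
        ring
      rw [h2, h3]
      exact mul_le_mul_of_nonneg_left (hineq i) (inv_nonneg.mpr hs.le)
    have hx'le1 : ∀ j, x' j ≤ 1 := by
      intro j
      rw [← hx'sum]
      exact Finset.single_le_sum (fun k _ => hx'nn k) (Finset.mem_univ j)
    have htB : t ≤ B := by
      have h1 : t = ∑ i, t * x' i := by
        rw [← Finset.mul_sum, hx'sum, mul_one]
      have h2 : ∑ i, t * x' i ≤ ∑ i, A.mulVec x' i :=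
        Finset.sum_le_sum fun i _ => hineq' i
      have h3 : ∑ i, A.mulVec x' i ≤ B := by
        rw [hB]
        refine Finset.sum_le_sum fun i _ => ?_
        simp only [Matrix.mulVec, dotProduct]
        refine Finset.sum_le_sum fun j _ => ?_
        calc A i j * x' j ≤ A i j * 1 :=
              mul_le_mul_of_nonneg_left (hx'le1 j) (hpos i j).le
          _ = A i j := mul_one _
      linarith
    exact hmax' (t, x') ⟨⟨ht.le, by linarith⟩, hx'simplex, hineq'⟩
  -- r is positive
  have hrpos : 0 < r := by
    have hone : ∀ i : Fin n, (0:ℝ) ≤ (fun _ : Fin n => (1:ℝ)) i := fun _ => zero_le_one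
    set t₀ : ℝ := Finset.univ.inf' (Finset.univ_nonempty) (fun i => A.mulVec (fun _ => 1) i)
      with ht₀
    have ht₀pos : 0 < t₀ := by
      rw [ht₀, Finset.lt_inf'_iff]
      exact fun i _ => pf_mulVec_pos A hpos hone ⟨default, one_pos⟩ i
    have : t₀ ≤ r := by
      refine cw_upper t₀ (fun _ => 1) hone ⟨default, one_pos⟩ fun i => ?_
      rw [mul_one]
      exact Finset.inf'_le _ (Finset.mem_univ i)
    linarith
  -- v is not zero
  have hvex : ∃ j, 0 < v j := by
    by_contra h
    push_neg at h
    have hz : ∀ j, v j = 0 := fun j => le_antisymm (h j) (hvnn j)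
    have hs1 := hv.2
    rw [Finset.sum_congr rfl (fun j _ => hz j)] at hs1
    simp at hs1
  -- the eigen-equation
  have key : A.mulVec v = r • v := by
    by_contra hne'
    have hstrict0 : ∃ i₀, r * v i₀ < A.mulVec v i₀ := by
      by_contra h
      push_neg at h
      apply hne'
      funext i
      have heq := le_antisymm (h i) (hAv i)
      simpa using heq
    obtain ⟨i₀, hi₀⟩ := hstrict0
    set d : Fin n → ℝ := A.mulVec v - r • v with hd
    have hdnn : ∀ i, 0 ≤ d i := fun i => by
      simp only [hd, Pi.sub_apply, Pi.smul_apply, smul_eq_mul, sub_nonneg]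
      exact hAv i
    have hdpos : 0 < d i₀ := by
      simp only [hd, Pi.sub_apply, Pi.smul_apply, smul_eq_mul, sub_pos]
      exact hi₀
    set w : Fin n → ℝ := A.mulVec v with hw
    have hwpos : ∀ i, 0 < w i := fun i => pf_mulVec_pos A hpos hvnn hvex i
    have hAd : ∀ i, 0 < A.mulVec d i := fun i =>
      pf_mulVec_pos A hpos hdnn ⟨i₀, hdpos⟩ i
    have hAdeq : A.mulVec d = A.mulVec w - r • A.mulVec v := by
      rw [hd, Matrix.mulVec_sub, Matrix.mulVec_smul]
    have hstrict : ∀ i, r * w i < A.mulVec w i := by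
      intro i
      have := hAd i
      rw [hAdeq] at this
      simp only [Pi.sub_apply, Pi.smul_apply, smul_eq_mul, sub_pos, ← hw] at this
      exact this
    set t : ℝ := Finset.univ.inf' (Finset.univ_nonempty) (fun i => A.mulVec w i / w i) with htdef
    have htr : r < t := by
      rw [htdef, Finset.lt_inf'_iff]
      intro i _
      rw [lt_div_iff₀ (hwpos i)]
      exact hstrict i
    have htle : t ≤ r := by
      refine cw_upper t w (fun i => (hwpos i).le) ⟨default, hwpos default⟩ fun i => ?_
      have h1 : t ≤ A.mulVec w i / w i := Finset.inf'_le _ (Finset.mem_univ i)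
      calc t * w i ≤ (A.mulVec w i / w i) * w i :=
            mul_le_mul_of_nonneg_right h1 (hwpos i).le
        _ = A.mulVec w i := div_mul_cancel₀ _ (hwpos i).ne'
    linarith
  -- v is strictly positive
  have hvpos : ∀ i, 0 < v i := by
    intro i
    have h1 : 0 < A.mulVec v i := pf_mulVec_pos A hpos hvnn hvex i
    have h2 : A.mulVec v i = r * v i := by rw [key]; simp
    nlinarith
  have hvne : v ≠ 0 := by
    intro h
    have := hvpos default
    rw [h] at this
    simp at this
  -- r is a real eigenvalue
  have hrspec : r ∈ spectrum ℝ A := pf_mem_spectrum_of_eig A r v hvne key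
  -- complex spectrum
  set Mc : Matrix (Fin n) (Fin n) ℂ := A.map (fun x => (x : ℂ)) with hMc
  have hrspecC : (r : ℂ) ∈ spectrum ℂ Mc := by
    refine pf_mem_spectrum_of_eig Mc (r:ℂ) (fun i => (v i : ℂ)) ?_ ?_
    · intro h
      have := congrFun h default
      simp only [Pi.zero_apply, Complex.ofReal_eq_zero] at this
      exact (hvpos default).ne' this
    · funext i
      have hk : (∑ j, A i j * v j) = r * v i := by
        have h0 := congrFun key i
        simpa [Matrix.mulVec, dotProduct] using h0
      simp only [Matrix.mulVec, dotProduct, hMc, Matrix.map_apply,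
        Pi.smul_apply, smul_eq_mul]
      exact_mod_cast congrArg (Complex.ofReal) hk
  -- spectral bound
  have hbound : ∀ μ ∈ spectrum ℂ Mc, ‖μ‖ ≤ r := by
    intro μ hμ
    obtain ⟨z, hz, hz2⟩ := pf_eig_of_mem_spectrum Mc μ hμ
    set x : Fin n → ℝ := fun i => ‖z i‖ with hx
    have hxnn : ∀ i, 0 ≤ x i := fun i => norm_nonneg _
    have hxpos : ∃ j, 0 < x j := by
      obtain ⟨j, hj⟩ := Function.ne_iff.mp hz
      exact ⟨j, by simpa [hx] using norm_pos_iff.mpr hj⟩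
    refine cw_upper (‖μ‖) x hxnn hxpos fun i => ?_
    have h1 : ‖μ‖ * x i = ‖Mc.mulVec z i‖ := by
      rw [hz2]
      simp only [Pi.smul_apply, smul_eq_mul, hx]
      exact (norm_mul μ (z i)).symm
    rw [h1]
    have h2 : ‖Mc.mulVec z i‖ ≤ ∑ j, ‖(A i j : ℂ) * z j‖ := by
      simp only [Matrix.mulVec, dotProduct, hMc, Matrix.map_apply]
      exact norm_sum_le _ _
    refine h2.trans ?_
    simp only [Matrix.mulVec, dotProduct]
    refine le_of_eq (Finset.sum_congr rfl fun j _ => ?_)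
    rw [norm_mul, Complex.norm_real, Real.norm_eq_abs, abs_of_pos (hpos i j)]
  -- specRad A = r
  have hspec : specRad A = r := by
    have hrmem : r ∈ (fun z : ℂ => ‖z‖) '' spectrum ℂ Mc :=
      ⟨(r:ℂ), hrspecC, by simp [abs_of_pos hrpos]⟩
    have hub : ∀ y ∈ (fun z : ℂ => ‖z‖) '' spectrum ℂ Mc, y ≤ r := by
      rintro y ⟨μ, hμ, rfl⟩
      exact hbound μ hμ
    rw [specRad, ← hMc]
    exact le_antisymm (csSup_le ⟨r, hrmem⟩ hub) (le_csSup ⟨r, hub⟩ hrmem)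
  have hr1 : r = 1 := by rw [hspec] at hρ; exact hρ
  subst hr1
  refine ⟨hrspec, v, hvpos, ?_⟩
  rw [key, one_smul]
end
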